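/- Let H ∈ ℝ^{n×n} be symmetric positive definite with eigenvalues μ₁,…,μ_n > 0, let α > 0, ε > 0, β₁, β₂ ∈ (0,1), and set s = α/ε and φ_i = s(1−β₁)μ_i. Consider the 3n×3n block matrix J with block rows [β₁ I, 0, (1−β₁)H], [0, β₂ I, 0], [−sβ₁ I, 0, I − s(1−β₁)H] (the Jacobian of the autonomous ADAM map at the fixed point (0,0,w⋆) where H = ∇²f(w⋆)). Then the characteristic polynomial of J factors as det(J − λI) = (β₂ − λ)^n · ∏_{i=1}^n (λ² − (1 + β₁ − φ_i)λ + β₁); equivalently, the eigenvalues of J (over ℂ) are λ_{1;i} = β₂ and λ_{2,3;i} = ((β₁ + 1 − φ_i) ± √((β₁ + 1 − φ_i)² − 4β₁))/2 for i = 1,…,n. -/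

import Mathlib

open Polynomial

/-- The Jacobian of the autonomous ADAM map at the fixed point `(0,0,wstar)`, as a
`3n × 3n` block matrix with block rows `[β₁ I, 0, (1−β₁)H]`, `[0, β₂ I, 0]`,
`[−sβ₁ I, 0, I − s(1−β₁)H]`, where `H = ∇²f(wstar)` and `s = α/ε`. -/
noncomputable def adamJacobian {n : ℕ} (β₁ β₂ s : ℝ) (H : Matrix (Fin n) (Fin n) ℝ) :
    Matrix (Fin n ⊕ (Fin n ⊕ Fin n)) (Fin n ⊕ (Fin n ⊕ Fin n)) ℝ :=
  Matrix.fromBlocks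
    (β₁ • (1 : Matrix (Fin n) (Fin n) ℝ))
    (Matrix.fromCols 0 ((1 - β₁) • H))
    (Matrix.fromRows 0 ((-(s * β₁)) • (1 : Matrix (Fin n) (Fin n) ℝ)))
    (Matrix.fromBlocks (β₂ • (1 : Matrix (Fin n) (Fin n) ℝ)) 0 0
      ((1 : Matrix (Fin n) (Fin n) ℝ) - (s * (1 - β₁)) • H))


open Matrix

lemma eval_charpoly' {n : ℕ} (H : Matrix (Fin n) (Fin n) ℝ) (x : ℝ) :
    H.charpoly.eval x = (x • (1 : Matrix (Fin n) (Fin n) ℝ) - H).det := by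
  rw [Matrix.charpoly, ← coe_evalRingHom, RingHom.map_det]
  congr 1
  ext i j
  rcases eq_or_ne i j with rfl | hij
  · simp [charmatrix_apply_eq, Matrix.one_apply]
  · simp [charmatrix_apply_ne _ _ _ hij, Matrix.one_apply, hij]

lemma fromBlocks_sub' {l m : Type*} (A A' : Matrix l l ℝ) (B B' : Matrix l m ℝ)
    (C C' : Matrix m l ℝ) (D D' : Matrix m m ℝ) :
    fromBlocks A B C D - fromBlocks A' B' C' D'
      = fromBlocks (A - A') (B - B') (C - C') (D - D') := by
  ext (i | i) (j | j) <;> simp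

lemma detL {n : ℕ} (H : Matrix (Fin n) (Fin n) ℝ) (μ : Fin n → ℝ)
    (hchar : H.charpoly = ∏ i, (X - C (μ i))) (c d : ℝ) :
    (c • (1 : Matrix (Fin n) (Fin n) ℝ) + d • H).det = ∏ i, (c + d * μ i) := by
  rcases eq_or_ne d 0 with rfl | hd
  · simp [Matrix.det_smul]
  · have key : ∀ x : ℝ, (x • (1 : Matrix (Fin n) (Fin n) ℝ) - H).det = ∏ i, (x - μ i) := by
      intro x
      rw [← eval_charpoly', hchar]
      simp [eval_prod]
    have hM : c • (1 : Matrix (Fin n) (Fin n) ℝ) + d • H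
        = (-d) • ((-(c/d)) • (1 : Matrix (Fin n) (Fin n) ℝ) - H) := by
      rw [smul_sub, smul_smul]
      field_simp
      module
    rw [hM, Matrix.det_smul, key, Fintype.card_fin,
      show ((-d) ^ n : ℝ) = ∏ _i : Fin n, (-d) by simp, ← Finset.prod_mul_distrib]
    refine Finset.prod_congr rfl fun i _ => ?_
    field_simp
    ring

lemma mainAux {n : ℕ} (H : Matrix (Fin n) (Fin n) ℝ) (μ : Fin n → ℝ)
    (hchar : H.charpoly = ∏ i, (X - C (μ i))) (s β₁ β₂ lam : ℝ)
    (ha : β₁ - lam ≠ 0) :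
    (adamJacobian β₁ β₂ s H - lam • 1).det =
      (β₂ - lam) ^ n *
        ∏ i, (lam ^ 2 - (1 + β₁ - s * (1 - β₁) * μ i) * lam + β₁) := by
  have hM : adamJacobian β₁ β₂ s H - lam • 1 =
      fromBlocks ((β₁ - lam) • 1) (fromCols 0 ((1 - β₁) • H))
        (fromRows 0 ((-(s * β₁)) • 1))
        (fromBlocks ((β₂ - lam) • 1) 0 0
          ((1 - lam) • 1 - (s * (1 - β₁)) • H)) := by
    have h1 : (lam • (1 : Matrix (Fin n ⊕ (Fin n ⊕ Fin n)) (Fin n ⊕ (Fin n ⊕ Fin n)) ℝ))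
        = fromBlocks (lam • 1) 0 0 (fromBlocks (lam • 1) 0 0 (lam • 1)) := by
      rw [← fromBlocks_one (l := Fin n) (m := Fin n ⊕ Fin n),
        ← fromBlocks_one (l := Fin n) (m := Fin n),
        Matrix.fromBlocks_smul, Matrix.fromBlocks_smul]
      simp
    rw [adamJacobian, h1, fromBlocks_sub', fromBlocks_sub']
    rw [Matrix.fromBlocks_inj]
    refine ⟨by module, by module, by module, ?_⟩
    rw [Matrix.fromBlocks_inj]
    exact ⟨by module, by module, by module, by module⟩
  letI : Invertible ((β₁ - lam) • (1 : Matrix (Fin n) (Fin n) ℝ)) :=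
    ⟨(β₁ - lam)⁻¹ • 1,
      by rw [Matrix.smul_mul, Matrix.mul_smul, smul_smul, inv_mul_cancel₀ ha, one_mul, one_smul],
      by rw [Matrix.smul_mul, Matrix.mul_smul, smul_smul, mul_inv_cancel₀ ha, one_mul, one_smul]⟩
  have hinv : ⅟((β₁ - lam) • (1 : Matrix (Fin n) (Fin n) ℝ))
      = (β₁ - lam)⁻¹ • (1 : Matrix (Fin n) (Fin n) ℝ) :=
    invOf_eq_right_inv
      (by rw [Matrix.smul_mul, Matrix.mul_smul, smul_smul, mul_inv_cancel₀ ha, one_mul, one_smul])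
  rw [hM, Matrix.det_fromBlocks₁₁, hinv]
  have hCB : fromRows (0 : Matrix (Fin n) (Fin n) ℝ)
          ((-(s * β₁)) • (1 : Matrix (Fin n) (Fin n) ℝ))
        * ((β₁ - lam)⁻¹ • (1 : Matrix (Fin n) (Fin n) ℝ))
        * fromCols (0 : Matrix (Fin n) (Fin n) ℝ) ((1 - β₁) • H)
      = fromBlocks (0 : Matrix (Fin n) (Fin n) ℝ) (0 : Matrix (Fin n) (Fin n) ℝ)
          (0 : Matrix (Fin n) (Fin n) ℝ) ((-(s * β₁) * (β₁ - lam)⁻¹ * (1 - β₁)) • H) := by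
    rw [fromRows_mul, fromRows_mul_fromCols]
    congr 1 <;> simp [Matrix.smul_mul, Matrix.mul_smul, smul_smul] <;> module
  rw [hCB, fromBlocks_sub']
  have hE : (1 - lam) • (1 : Matrix (Fin n) (Fin n) ℝ) - (s * (1 - β₁)) • H
        - (-(s * β₁) * (β₁ - lam)⁻¹ * (1 - β₁)) • H
      = (1 - lam) • 1
          + (-(s * (1 - β₁)) - (-(s * β₁) * (β₁ - lam)⁻¹ * (1 - β₁))) • H := by
    module
  rw [hE, sub_zero, sub_zero, Matrix.det_fromBlocks_zero₂₁, detL H μ hchar,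
    Matrix.det_smul, Matrix.det_smul, Matrix.det_one, Fintype.card_fin,
    mul_one, mul_one, mul_left_comm]
  congr 1
  rw [show ((β₁ - lam) ^ n : ℝ) = ∏ _i : Fin n, (β₁ - lam) by simp,
    ← Finset.prod_mul_distrib]
  refine Finset.prod_congr rfl fun i _ => ?_
  field_simp
  ring


/-- The characteristic polynomial of the ADAM Jacobian at the fixed point factors as
`det(J − λI) = (β₂ − λ)^n · ∏ᵢ (λ² − (1 + β₁ − φᵢ)λ + β₁)` with
`φᵢ = (α/ε)(1−β₁)μᵢ`, where `μ₁,…,μₙ` are the eigenvalues of the symmetric positive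
definite matrix `H`. -/
theorem stmt2 {n : ℕ} (H : Matrix (Fin n) (Fin n) ℝ) (μ : Fin n → ℝ)
    (hsymm : H.IsSymm) (hpd : H.PosDef) (hμ : ∀ i, 0 < μ i)
    (hchar : H.charpoly = ∏ i, (X - C (μ i)))
    (α ε β₁ β₂ : ℝ) (hα : 0 < α) (hε : 0 < ε)
    (hβ₁ : β₁ ∈ Set.Ioo (0 : ℝ) 1) (hβ₂ : β₂ ∈ Set.Ioo (0 : ℝ) 1) :
    ∀ lam : ℝ,
      (adamJacobian β₁ β₂ (α / ε) H - lam • 1).det =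
        (β₂ - lam) ^ n *
          ∏ i, (lam ^ 2 - (1 + β₁ - (α / ε) * (1 - β₁) * μ i) * lam + β₁) := by
  set s : ℝ := α / ε
  have hf : Continuous fun lam : ℝ => (adamJacobian β₁ β₂ s H - lam • 1).det := by
    refine Continuous.matrix_det ?_
    exact continuous_pi fun i => continuous_pi fun j => by
      simp only [Matrix.sub_apply, Matrix.smul_apply, smul_eq_mul]
      fun_prop
  have hg : Continuous fun lam : ℝ =>
      (β₂ - lam) ^ n * ∏ i, (lam ^ 2 - (1 + β₁ - s * (1 - β₁) * μ i) * lam + β₁) := by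
    refine Continuous.mul (by fun_prop) ?_
    exact continuous_finset_prod _ fun i _ => by fun_prop
  have heq : (fun lam : ℝ => (adamJacobian β₁ β₂ s H - lam • 1).det)
      = fun lam => (β₂ - lam) ^ n *
          ∏ i, (lam ^ 2 - (1 + β₁ - s * (1 - β₁) * μ i) * lam + β₁) := by
    refine Continuous.ext_on (dense_compl_singleton β₁) hf hg ?_
    intro lam hlam
    exact mainAux H μ hchar s β₁ β₂ lam (sub_ne_zero_of_ne (Ne.symm hlam))
  exact fun lam => congrFun heq lam
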